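/- Let k > 0 and 0 < c < 1 be real, and let n, x ∈ ℕ (with the convention M̂_{−1}(x; 2k, c) := 0). Then √(n(2k+n−1)) M̂_{n−1}(x; 2k, c) − 2√c (k+n) M̂_n(x; 2k, c) + c√((n+1)(2k+n)) M̂_{n+1}(x; 2k, c) = −√c (1−c)(2k+x) M̂_n(x+1; 2k, c). (This identity encodes the action π_k^+(B_c) v⁽ˣ⁾ = −√((x+1)(2k+x)) v⁽ˣ⁺¹⁾ of the conjugated raising element B_c on the X_c-eigenvectors v⁽ˣ⁾_n = M̂_n(x; 2k, c)√(w(x; 2k, c)) in the positive discrete series representation of su(1,1).) -/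

import Mathlib

open Finset

/-- Pochhammer symbol `(q)_m = q(q+1)⋯(q+m−1)` for a real `q`. -/
noncomputable def poch (q : ℝ) (m : ℕ) : ℝ := ∏ l ∈ Finset.range m, (q + l)

/-- The Meixner polynomial
`M_n(x; β, c) = ∑_{j=0}^n ((−n)_j (−x)_j/((β)_j j!)) (1 − 1/c)^j = ₂F₁(−n,−x;β;1−1/c)`. -/
noncomputable def meixner (n x : ℕ) (β c : ℝ) : ℝ :=
  ∑ j ∈ Finset.range (n + 1),
    poch (-(n : ℝ)) j * poch (-(x : ℝ)) j / (poch β j * (j.factorial : ℝ)) * (1 - 1 / c) ^ j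

/-- The orthonormal Meixner polynomial `M̂_n(x; β, c) = √((β)_n c^n/n!) M_n(x; β, c)`. -/
noncomputable def meixnerHat (n x : ℕ) (β c : ℝ) : ℝ :=
  Real.sqrt (poch β n * c ^ n / (n.factorial : ℝ)) * meixner n x β c

/-- The Meixner weight `w(x; β, c) = ((β)_x/x!) c^x (1−c)^β`. -/
noncomputable def meixnerWeight (x : ℕ) (β c : ℝ) : ℝ :=
  poch β x / (x.factorial : ℝ) * c ^ x * (1 - c) ^ β


/-! ### Auxiliary lemmas -/

lemma poch_zero' (q : ℝ) : poch q 0 = 1 := by simp [poch]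

lemma poch_one' (q : ℝ) : poch q 1 = q := by simp [poch]

lemma poch_succ (q : ℝ) (m : ℕ) : poch q (m+1) = poch q m * (q + m) := by
  simp [poch, Finset.prod_range_succ]

lemma poch_succ' (q : ℝ) (m : ℕ) : poch q (m+1) = q * poch (q+1) m := by
  rw [poch, poch, Finset.prod_range_succ']
  simp only [Nat.cast_zero, add_zero]
  rw [mul_comm]
  congr 1
  refine Finset.prod_congr rfl fun l _ => by push_cast; ring

lemma poch_pos {q : ℝ} (hq : 0 < q) (m : ℕ) : 0 < poch q m :=
  Finset.prod_pos fun l _ => by positivity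

lemma poch_neg_nat_eq_zero {n j : ℕ} (h : n < j) : poch (-(n:ℝ)) j = 0 := by
  apply Finset.prod_eq_zero (Finset.mem_range.2 h)
  simp

noncomputable def mxc (β c : ℝ) (n x j : ℕ) : ℝ :=
  poch (-(n : ℝ)) j * poch (-(x : ℝ)) j / (poch β j * (j.factorial : ℝ)) * (1 - 1 / c) ^ j

lemma mxc_eq_zero (β c : ℝ) {n : ℕ} (x : ℕ) {j : ℕ} (h : n < j) : mxc β c n x j = 0 := by
  simp [mxc, poch_neg_nat_eq_zero h]

lemma meixner_eq_sum (β c : ℝ) (n x : ℕ) {N : ℕ} (hN : n + 1 ≤ N) :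
    meixner n x β c = ∑ j ∈ Finset.range N, mxc β c n x j := by
  rw [meixner]
  exact Finset.sum_subset (Finset.range_subset_range.2 hN) fun j _ hj =>
    mxc_eq_zero β c x (by simpa using hj)

lemma shift_sum (f : ℕ → ℝ) (s : ℝ) (N : ℕ) :
    (∑ j ∈ Finset.range N, f j) * s
      = ∑ j ∈ Finset.range (N+1), (if j = 0 then 0 else f (j-1) * s) := by
  rw [Finset.sum_range_succ']
  simp [Finset.sum_mul]

lemma meixner_zero (x : ℕ) (β c : ℝ) : meixner 0 x β c = 1 := by
  simp [meixner, poch_zero']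

lemma sqrt_coef (a u w b v : ℝ) (ha : 0 ≤ a) (hau : 0 ≤ a*u) (hb : 0 ≤ b)
    (h : a*u*w = b^2*v) :
    Real.sqrt a * Real.sqrt u * Real.sqrt w = b * Real.sqrt v := by
  rw [← Real.sqrt_mul ha, ← Real.sqrt_mul hau, h, Real.sqrt_mul (sq_nonneg b),
    Real.sqrt_sq hb]

set_option maxHeartbeats 1000000 in
lemma lemB (β c : ℝ) (hβ : 0 < β) (hc : c ≠ 0) (n x : ℕ) :
    (n:ℝ) * meixner (n-1) x β c - c*((x:ℝ)+(n:ℝ)+β) * meixner n x β c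
      + c*(β+(x:ℝ)) * meixner n (x+1) β c = 0 := by
  cases n with
  | zero => simp [meixner_zero]; ring
  | succ m =>
    have hm : meixner m x β c = ∑ j ∈ Finset.range (m+2), mxc β c m x j :=
      meixner_eq_sum β c m x (by omega)
    have hm' : meixner m x β c = ∑ j ∈ Finset.range (m+3), mxc β c m x j :=
      meixner_eq_sum β c m x (by omega)
    have hn1 : meixner (m+1) x β c = ∑ j ∈ Finset.range (m+3), mxc β c (m+1) x j :=
      meixner_eq_sum β c (m+1) x (by omega)
    have hn2 : meixner (m+1) (x+1) β c = ∑ j ∈ Finset.range (m+3), mxc β c (m+1) (x+1) j :=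
      meixner_eq_sum β c (m+1) (x+1) (by omega)
    have hcs : c * (1 - (1 - 1/c)) = 1 := by field_simp; ring
    have hshift : (∑ j ∈ Finset.range (m+2), mxc β c m x j) * (1 - 1/c)
        = ∑ j ∈ Finset.range (m+3), (if j = 0 then 0 else mxc β c m x (j-1) * (1 - 1/c)) :=
      shift_sum _ _ (m+2)
    have key : ∀ j, ((m:ℝ)+1) * mxc β c m x j
        - ((m:ℝ)+1) * (if j = 0 then 0 else mxc β c m x (j-1) * (1 - 1/c))
        - ((x:ℝ)+((m:ℝ)+1)+β) * mxc β c (m+1) x j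
        + (β+(x:ℝ)) * mxc β c (m+1) (x+1) j = 0 := by
      intro j
      cases j with
      | zero => simp [mxc, poch_zero']; ring
      | succ t =>
        simp only [Nat.succ_ne_zero, if_false, Nat.add_sub_cancel]
        have hβt : 0 < poch β t := poch_pos hβ t
        have hfac : ((t+1).factorial : ℝ) = ((t:ℝ)+1) * (t.factorial : ℝ) := by
          rw [Nat.factorial_succ]; push_cast; ring
        have pA : poch (-(m:ℝ)) (t+1) = poch (-(m:ℝ)) t * (-(m:ℝ)+t) := poch_succ _ _
        have pB : poch (-(x:ℝ)) (t+1) = poch (-(x:ℝ)) t * (-(x:ℝ)+t) := poch_succ _ _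
        have pC : poch (-((m:ℝ)+1)) (t+1) = (-((m:ℝ)+1)) * poch (-(m:ℝ)) t := by
          rw [poch_succ']; congr 2; ring
        have pD : poch (-((x:ℝ)+1)) (t+1) = (-((x:ℝ)+1)) * poch (-(x:ℝ)) t := by
          rw [poch_succ']; congr 2; ring
        have pE : poch β (t+1) = poch β t * (β+t) := poch_succ _ _
        have hc1 : (-(((m+1:ℕ)):ℝ)) = -((m:ℝ)+1) := by push_cast; ring
        have hc2 : (-(((x+1:ℕ)):ℝ)) = -((x:ℝ)+1) := by push_cast; ring
        simp only [mxc, hc1, hc2, pA, pB, pC, pD, pE, hfac, pow_succ]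
        have hβt' : β + (t:ℝ) ≠ 0 := by positivity
        have ht1 : ((t:ℝ)+1) ≠ 0 := by positivity
        have htf : (t.factorial : ℝ) ≠ 0 := by positivity
        set u : ℝ := 1 - 1/c with hu
        set P := poch (-(m:ℝ)) t
        set Q := poch (-(x:ℝ)) t
        set D := poch β t
        set T := (t.factorial : ℝ)
        field_simp
        ring
    have E : ∑ j ∈ Finset.range (m+3), (((m:ℝ)+1) * mxc β c m x j
        - ((m:ℝ)+1) * (if j = 0 then 0 else mxc β c m x (j-1) * (1 - 1/c))
        - ((x:ℝ)+((m:ℝ)+1)+β) * mxc β c (m+1) x j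
        + (β+(x:ℝ)) * mxc β c (m+1) (x+1) j) = 0 :=
      Finset.sum_eq_zero fun j _ => key j
    rw [Finset.sum_add_distrib, Finset.sum_sub_distrib, Finset.sum_sub_distrib,
      ← Finset.mul_sum, ← Finset.mul_sum, ← Finset.mul_sum, ← Finset.mul_sum] at E
    simp only [Nat.add_sub_cancel]
    rw [hm, hn1, hn2]
    push_cast
    have heq : (∑ j ∈ Finset.range (m+2), mxc β c m x j)
        = ∑ j ∈ Finset.range (m+3), mxc β c m x j := hm.symm.trans hm'
    linear_combination c * E + c*((m:ℝ)+1) * heq - c*((m:ℝ)+1) * hshift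
      - (((m:ℝ)+1) * (∑ j ∈ Finset.range (m+2), mxc β c m x j)) * hcs

set_option maxHeartbeats 1000000 in
lemma lemA (β c : ℝ) (hβ : 0 < β) (hc : c ≠ 0) (n x : ℕ) :
    (n:ℝ) * meixner (n-1) x β c - ((n:ℝ) + ((n:ℝ)+β)*c) * meixner n x β c
      + c*((n:ℝ)+β) * meixner (n+1) x β c - (c-1)*(x:ℝ)*meixner n x β c = 0 := by
  cases n with
  | zero =>
    simp only [Nat.cast_zero, Nat.zero_sub, zero_add, zero_mul, meixner_zero, mul_one]
    have h1 : meixner 1 x β c = 1 + (-1) * (-(x:ℝ)) / (β * 1) * (1 - 1/c) := by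
      simp [meixner, Finset.sum_range_succ, poch_zero', poch_one']
    rw [h1]
    field_simp
    ring
  | succ m =>
    have hm : meixner m x β c = ∑ j ∈ Finset.range (m+2), mxc β c m x j :=
      meixner_eq_sum β c m x (by omega)
    have hm' : meixner m x β c = ∑ j ∈ Finset.range (m+3), mxc β c m x j :=
      meixner_eq_sum β c m x (by omega)
    have hn : meixner (m+1) x β c = ∑ j ∈ Finset.range (m+2), mxc β c (m+1) x j :=
      meixner_eq_sum β c (m+1) x (by omega)
    have hn' : meixner (m+1) x β c = ∑ j ∈ Finset.range (m+3), mxc β c (m+1) x j :=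
      meixner_eq_sum β c (m+1) x (by omega)
    have hn1 : meixner (m+2) x β c = ∑ j ∈ Finset.range (m+3), mxc β c (m+2) x j :=
      meixner_eq_sum β c (m+2) x (by omega)
    have hcs : c * (1 - (1 - 1/c)) = 1 := by field_simp; ring
    have hcu : c * (1 - 1/c) = c - 1 := by field_simp
    have hshiftm : (∑ j ∈ Finset.range (m+2), mxc β c m x j) * (1 - 1/c)
        = ∑ j ∈ Finset.range (m+3), (if j = 0 then 0 else mxc β c m x (j-1) * (1 - 1/c)) :=
      shift_sum _ _ (m+2)
    have hshiftn : (∑ j ∈ Finset.range (m+2), mxc β c (m+1) x j) * (1 - 1/c)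
        = ∑ j ∈ Finset.range (m+3), (if j = 0 then 0 else mxc β c (m+1) x (j-1) * (1 - 1/c)) :=
      shift_sum _ _ (m+2)
    have key : ∀ j, ((((((((m:ℝ)+1) * mxc β c m x j
        - ((m:ℝ)+1) * (if j = 0 then 0 else mxc β c m x (j-1) * (1 - 1/c)))
        - ((m:ℝ)+1) * mxc β c (m+1) x j)
        + ((m:ℝ)+1) * (if j = 0 then 0 else mxc β c (m+1) x (j-1) * (1 - 1/c)))
        - (((m:ℝ)+1)+β) * mxc β c (m+1) x j)
        + (((m:ℝ)+1)+β) * mxc β c (m+2) x j)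
        - (x:ℝ) * (if j = 0 then 0 else mxc β c (m+1) x (j-1) * (1 - 1/c))) = 0 := by
      intro j
      cases j with
      | zero => simp [mxc, poch_zero']; ring
      | succ t =>
        simp only [Nat.succ_ne_zero, if_false, Nat.add_sub_cancel]
        have hβt : 0 < poch β t := poch_pos hβ t
        have hfac : ((t+1).factorial : ℝ) = ((t:ℝ)+1) * (t.factorial : ℝ) := by
          rw [Nat.factorial_succ]; push_cast; ring
        have pA : poch (-(m:ℝ)) (t+1) = poch (-(m:ℝ)) t * (-(m:ℝ)+t) := poch_succ _ _
        have pB : poch (-(x:ℝ)) (t+1) = poch (-(x:ℝ)) t * (-(x:ℝ)+t) := poch_succ _ _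
        have pC : poch (-((m:ℝ)+1)) (t+1) = (-((m:ℝ)+1)) * poch (-(m:ℝ)) t := by
          rw [poch_succ']; congr 2; ring
        have pF : poch (-((m:ℝ)+2)) (t+1) = (-((m:ℝ)+2)) * poch (-((m:ℝ)+1)) t := by
          rw [poch_succ']; congr 2; ring
        have pC' : poch (-((m:ℝ)+1)) (t+1) = poch (-((m:ℝ)+1)) t * (-((m:ℝ)+1)+t) :=
          poch_succ _ _
        have pE : poch β (t+1) = poch β t * (β+t) := poch_succ _ _
        have hc1 : (-(((m+1:ℕ)):ℝ)) = -((m:ℝ)+1) := by push_cast; ring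
        have hc3 : (-(((m+2:ℕ)):ℝ)) = -((m:ℝ)+2) := by push_cast; ring
        have hm1 : ((m:ℝ)+1) ≠ 0 := by positivity
        have hP : poch (-(m:ℝ)) t
            = poch (-((m:ℝ)+1)) t * (((m:ℝ)+1) - (t:ℝ)) / ((m:ℝ)+1) := by
          have h12 : (-((m:ℝ)+1)) * poch (-(m:ℝ)) t
              = poch (-((m:ℝ)+1)) t * (-((m:ℝ)+1)+t) := pC.symm.trans pC'
          rw [eq_div_iff hm1]
          linear_combination -h12
        simp only [mxc, hc1, hc3, pA, pB, pC, pF, pE, hfac, pow_succ]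
        rw [hP]
        have hβt' : β + (t:ℝ) ≠ 0 := by positivity
        have ht1 : ((t:ℝ)+1) ≠ 0 := by positivity
        have htf : (t.factorial : ℝ) ≠ 0 := by positivity
        have hD : poch β t ≠ 0 := ne_of_gt hβt
        set u : ℝ := 1 - 1/c with hu
        set B : ℝ := poch (-((m:ℝ)+1)) t with hB
        set Q : ℝ := poch (-(x:ℝ)) t with hQ
        set D : ℝ := poch β t with hDD
        set T : ℝ := (t.factorial : ℝ) with hT
        field_simp
        ring
    have E : ∑ j ∈ Finset.range (m+3), (((((((((m:ℝ)+1) * mxc β c m x j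
        - ((m:ℝ)+1) * (if j = 0 then 0 else mxc β c m x (j-1) * (1 - 1/c)))
        - ((m:ℝ)+1) * mxc β c (m+1) x j)
        + ((m:ℝ)+1) * (if j = 0 then 0 else mxc β c (m+1) x (j-1) * (1 - 1/c)))
        - (((m:ℝ)+1)+β) * mxc β c (m+1) x j)
        + (((m:ℝ)+1)+β) * mxc β c (m+2) x j)
        - (x:ℝ) * (if j = 0 then 0 else mxc β c (m+1) x (j-1) * (1 - 1/c)))) = 0 :=
      Finset.sum_eq_zero fun j _ => key j
    rw [Finset.sum_sub_distrib, Finset.sum_add_distrib, Finset.sum_sub_distrib,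
      Finset.sum_add_distrib, Finset.sum_sub_distrib, Finset.sum_sub_distrib,
      ← Finset.mul_sum, ← Finset.mul_sum, ← Finset.mul_sum, ← Finset.mul_sum,
      ← Finset.mul_sum, ← Finset.mul_sum, ← Finset.mul_sum] at E
    simp only [Nat.add_sub_cancel]
    rw [hm, hn, hn1]
    push_cast
    have heqm : (∑ j ∈ Finset.range (m+2), mxc β c m x j)
        = ∑ j ∈ Finset.range (m+3), mxc β c m x j := hm.symm.trans hm'
    have heqn : (∑ j ∈ Finset.range (m+2), mxc β c (m+1) x j)
        = ∑ j ∈ Finset.range (m+3), mxc β c (m+1) x j := hn.symm.trans hn'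
    linear_combination c * E + c*((m:ℝ)+1) * heqm
      - (c*((m:ℝ)+1) + c*(((m:ℝ)+1)+β)) * heqn
      - c*((m:ℝ)+1) * hshiftm + (c*((m:ℝ)+1) - c*(x:ℝ)) * hshiftn
      - (((m:ℝ)+1) * (∑ j ∈ Finset.range (m+2), mxc β c m x j)) * hcs
      + (((m:ℝ)+1) * (∑ j ∈ Finset.range (m+2), mxc β c (m+1) x j)) * hcs
      + ((x:ℝ) * (∑ j ∈ Finset.range (m+2), mxc β c (m+1) x j)) * hcu


lemma lemStar (β c : ℝ) (hβ : 0 < β) (hc : c ≠ 0) (n x : ℕ) :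
    (n:ℝ) * meixner (n-1) x β c - c*(β+2*(n:ℝ)) * meixner n x β c
      + c^2*(β+(n:ℝ)) * meixner (n+1) x β c
      + c*(1-c)*(β+(x:ℝ)) * meixner n (x+1) β c = 0 := by
  linear_combination c * lemA β c hβ hc n x + (1-c) * lemB β c hβ hc n x

/-- Three-term contiguous identity in `x` for the orthonormal Meixner polynomials
(the convention `M̂_{−1} := 0` is immaterial since the coefficient
`√(n(2k+n−1))` vanishes at `n = 0`):
`√(n(2k+n−1)) M̂_{n−1}(x；2k,c) − 2√c(k+n) M̂_n(x;2k,c) + c√((n+1)(2k+n)) M̂_{n+1}(x;2k,c)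
  = −√c(1−c)(2k+x) M̂_n(x+1;2k,c)`,
encoding `π_k^+(B_c) v⁽ˣ⁾ = −√((x+1)(2k+x)) v⁽ˣ⁺¹⁾`. -/
theorem meixnerHat_Bc_action (k c : ℝ) (hk : 0 < k) (hc0 : 0 < c) (hc1 : c < 1)
    (n x : ℕ) :
    Real.sqrt ((n : ℝ) * (2 * k + n - 1)) *
        (if n = 0 then 0 else meixnerHat (n - 1) x (2 * k) c) -
      2 * Real.sqrt c * (k + n) * meixnerHat n x (2 * k) c +
      c * Real.sqrt (((n : ℝ) + 1) * (2 * k + n)) * meixnerHat (n + 1) x (2 * k) c =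
    -Real.sqrt c * (1 - c) * (2 * k + x) * meixnerHat n (x + 1) (2 * k) c := by
  have hβ : 0 < 2*k := by linarith
  have hc : c ≠ 0 := ne_of_gt hc0
  have hstar := lemStar (2*k) c hβ hc n x
  have hsc : Real.sqrt c ≠ 0 := (Real.sqrt_pos.2 hc0).ne'
  have hcc : Real.sqrt c * Real.sqrt c = c := Real.mul_self_sqrt hc0.le
  have hfacn : ((n.factorial : ℝ)) ≠ 0 := by positivity
  -- coefficient identity for the first term
  have e1 : Real.sqrt ((n : ℝ) * (2 * k + n - 1)) *
        (if n = 0 then 0 else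
          Real.sqrt (poch (2*k) (n-1) * c^(n-1) / ((n-1).factorial : ℝ)) *
            meixner (n-1) x (2*k) c) * Real.sqrt c
      = (n:ℝ) * Real.sqrt (poch (2*k) n * c^n / (n.factorial : ℝ)) *
          meixner (n-1) x (2*k) c := by
    cases n with
    | zero => simp
    | succ m =>
      rw [if_neg (Nat.succ_ne_zero m)]
      simp only [Nat.add_sub_cancel]
      push_cast
      have hm0 : (0:ℝ) ≤ (m:ℝ) := Nat.cast_nonneg m
      have ha : (0:ℝ) ≤ ((m:ℝ)+1) * (2*k + ((m:ℝ)+1) - 1) := by nlinarith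
      have hau : (0:ℝ) ≤ (((m:ℝ)+1) * (2*k + ((m:ℝ)+1) - 1)) *
          (poch (2*k) m * c^m / (m.factorial : ℝ)) := by
        have := poch_pos hβ m
        have : (0:ℝ) ≤ poch (2*k) m * c^m / (m.factorial : ℝ) := by positivity
        nlinarith
      have hb : (0:ℝ) ≤ (m:ℝ)+1 := by positivity
      have harg : (((m:ℝ)+1) * (2*k + ((m:ℝ)+1) - 1)) *
            (poch (2*k) m * c^m / (m.factorial : ℝ)) * c
          = ((m:ℝ)+1)^2 * (poch (2*k) (m+1) * c^(m+1) / ((m+1).factorial : ℝ)) := by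
        rw [poch_succ, Nat.factorial_succ]
        have hfm : ((m.factorial : ℝ)) ≠ 0 := by positivity
        push_cast
        field_simp
        ring
      have hco := sqrt_coef _ _ _ _ _ ha hau hb harg
      linear_combination (meixner m x (2*k) c) * hco
  -- coefficient identity for the third term
  have e3 : Real.sqrt (((n : ℝ) + 1) * (2 * k + n)) *
        Real.sqrt (poch (2*k) (n+1) * c^(n+1) / ((n+1).factorial : ℝ)) * Real.sqrt c
      = c * (2*k + (n:ℝ)) * Real.sqrt (poch (2*k) n * c^n / (n.factorial : ℝ)) := by
    have hn0 : (0:ℝ) ≤ (n:ℝ) := Nat.cast_nonneg n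
    have ha : (0:ℝ) ≤ ((n:ℝ)+1) * (2*k + (n:ℝ)) := by nlinarith
    have hau : (0:ℝ) ≤ (((n:ℝ)+1) * (2*k + (n:ℝ))) *
        (poch (2*k) (n+1) * c^(n+1) / ((n+1).factorial : ℝ)) := by
      have h1 := poch_pos hβ (n+1)
      have h2 : (0:ℝ) ≤ poch (2*k) (n+1) * c^(n+1) / ((n+1).factorial : ℝ) := by positivity
      nlinarith
    have hb : (0:ℝ) ≤ c * (2*k + (n:ℝ)) := by positivity
    have harg : (((n:ℝ)+1) * (2*k + (n:ℝ))) *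
          (poch (2*k) (n+1) * c^(n+1) / ((n+1).factorial : ℝ)) * c
        = (c * (2*k + (n:ℝ)))^2 * (poch (2*k) n * c^n / (n.factorial : ℝ)) := by
      rw [poch_succ, Nat.factorial_succ]
      push_cast
      field_simp
      ring
    exact sqrt_coef _ _ _ _ _ ha hau hb harg
  refine mul_right_cancel₀ hsc ?_
  simp only [meixnerHat]
  linear_combination e1 + (c * meixner (n+1) x (2*k) c) * e3
    - (2*(k+(n:ℝ)) * Real.sqrt (poch (2*k) n * c^n / (n.factorial : ℝ)) *
        meixner n x (2*k) c) * hcc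
    + ((1-c)*(2*k+(x:ℝ)) * Real.sqrt (poch (2*k) n * c^n / (n.factorial : ℝ)) *
        meixner n (x+1) (2*k) c) * hcc
    + Real.sqrt (poch (2*k) n * c^n / (n.factorial : ℝ)) * hstar
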